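/- Let F : 𝒱 → 𝒲 be a closed functor between left skew-closed categories. For each 𝒱-category 𝒜, the data consisting of the objects of 𝒜, hom-objects F𝒜(A,B), units F(j_A) ∘ ψ₀ : I → F𝒜(A,A), and composition maps ψ ∘ F(L^A_{B,C}) : F𝒜(B,C) → [F𝒜(A,B),F𝒜(A,C)] satisfy axioms (EC1)–(EC3), so define a 𝒲-category F_*𝒜. For each 𝒱-functor T : 𝒜 → 𝒳, the same object function together with the morphisms F(T_{A,B}) : F𝒜(A,B) → F𝒳(TA,TB) satisfies (EF1)–(EF2), so defines a 𝒲-functor F_*T : F_*𝒜 → F_*𝒳. Moreover F_*(1_𝒜) = 1_{F_*𝒜} and F_*(S∘T) = F_*S ∘ F_*T, so F_* is a functor from the category of 𝒱-categories and 𝒱-functors to the category of 𝒲-categories and 𝒲-functors. -/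

import Mathlib

open CategoryTheory

universe v u w

/-- A left skew-closed category structure on a category `V` (Street, "Skew-closed categories"). -/
structure SkewClosedStruct (V : Type u) [Category.{v} V] where
  ihom : V → V → V
  imap : ∀ {A A' B B' : V}, (A' ⟶ A) → (B ⟶ B') → (ihom A B ⟶ ihom A' B')
  imap_id : ∀ (A B : V), imap (𝟙 A) (𝟙 B) = 𝟙 (ihom A B)
  imap_comp : ∀ {A A' A'' B B' B'' : V} (f : A' ⟶ A) (f' : A'' ⟶ A') (g : B ⟶ B') (g' : B' ⟶ B''),
      imap (f' ≫ f) (g ≫ g') = imap f g ≫ imap f' g'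
  unit : V
  i : ∀ A : V, ihom unit A ⟶ A
  i_natural : ∀ {A B : V} (f : A ⟶ B), imap (𝟙 unit) f ≫ i B = i A ≫ f
  j : ∀ A : V, unit ⟶ ihom A A
  j_natural : ∀ {A B : V} (f : A ⟶ B), j A ≫ imap (𝟙 A) f = j B ≫ imap f (𝟙 B)
  L : ∀ A B C : V, ihom B C ⟶ ihom (ihom A B) (ihom A C)
  L_natural : ∀ {B B' C C' : V} (A : V) (f : B' ⟶ B) (g : C ⟶ C'),
      imap f g ≫ L A B' C' = L A B C ≫ imap (imap (𝟙 A) f) (imap (𝟙 A) g)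
  L_extranatural : ∀ {A A' : V} (h : A' ⟶ A) (B C : V),
      L A B C ≫ imap (𝟙 (ihom A B)) (imap h (𝟙 C))
        = L A' B C ≫ imap (imap h (𝟙 B)) (𝟙 (ihom A' C))
  SCC1 : ∀ A B C D : V,
      L A C D ≫ L (ihom A B) (ihom A C) (ihom A D) ≫
          imap (L A B C) (𝟙 (ihom (ihom A B) (ihom A D)))
        = L B C D ≫ imap (𝟙 (ihom B C)) (L A B D)
  SCC2 : ∀ A C : V, L A A C ≫ imap (j A) (𝟙 (ihom A C)) ≫ i (ihom A C) = 𝟙 (ihom A C)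
  SCC3 : ∀ A B : V, j B ≫ L A B B = j (ihom A B)
  SCC4 : ∀ B C : V, L unit B C ≫ imap (𝟙 (ihom unit B)) (i C) = imap (i B) (𝟙 C)
  SCC5 : j unit ≫ i unit = 𝟙 unit

/-- A category enriched in the left skew-closed category `𝒱`. -/
structure VCat (V : Type u) [Category.{v} V] (𝒱 : SkewClosedStruct V) where
  Obj : Type w
  Hom : Obj → Obj → V
  id : ∀ A, 𝒱.unit ⟶ Hom A A
  comp : ∀ A B C, Hom B C ⟶ 𝒱.ihom (Hom A B) (Hom A C)
  EC1 : ∀ A B C D,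
      comp A C D ≫ 𝒱.L (Hom A B) (Hom A C) (Hom A D) ≫
          𝒱.imap (comp A B C) (𝟙 (𝒱.ihom (Hom A B) (Hom A D)))
        = comp B C D ≫ 𝒱.imap (𝟙 (Hom B C)) (comp A B D)
  EC2 : ∀ A C, comp A A C ≫ 𝒱.imap (id A) (𝟙 (Hom A C)) ≫ 𝒱.i (Hom A C) = 𝟙 (Hom A C)
  EC3 : ∀ A B, id B ≫ comp A B B = 𝒱.j (Hom A B)

/-- A `𝒱`-functor between `𝒱`-categories. -/
structure VFun {V : Type u} [Category.{v} V] {𝒱 : SkewClosedStruct V}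
    (𝒜 : VCat.{v, u, w} V 𝒱) (𝒳 : VCat.{v, u, w} V 𝒱) where
  obj : 𝒜.Obj → 𝒳.Obj
  map : ∀ A B, 𝒜.Hom A B ⟶ 𝒳.Hom (obj A) (obj B)
  EF1 : ∀ A B C,
      map A C ≫ 𝒳.comp (obj B) (obj A) (obj C) ≫
          𝒱.imap (map B A) (𝟙 (𝒳.Hom (obj B) (obj C)))
        = 𝒜.comp B A C ≫ 𝒱.imap (𝟙 (𝒜.Hom B A)) (map B C)
  EF2 : ∀ A, 𝒜.id A ≫ map A A = 𝒳.id (obj A)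

/-- The ground skew-closed category `𝒱`, regarded as a `𝒱`-category. -/
@[reducible] def SkewClosedStruct.self {V : Type u} [Category.{v} V] (𝒱 : SkewClosedStruct V) :
    VCat.{v, u, u} V 𝒱 where
  Obj := V
  Hom := 𝒱.ihom
  id := 𝒱.j
  comp := 𝒱.L
  EC1 := 𝒱.SCC1
  EC2 := 𝒱.SCC2
  EC3 := 𝒱.SCC3

/-- A `𝒱`-natural transformation between `𝒱`-functors with values in `𝒱` itself. -/
structure VNat {V : Type u} [Category.{v} V] {𝒱 : SkewClosedStruct V}
    {𝒜 : VCat.{v, u, u} V 𝒱} (S T : VFun 𝒜 𝒱.self) where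
  app : ∀ A, S.obj A ⟶ T.obj A
  naturality : ∀ A B,
      T.map A B ≫ 𝒱.imap (app A) (𝟙 (T.obj B))
        = S.map A B ≫ 𝒱.imap (𝟙 (S.obj A)) (app B)

/-- The representable `𝒱`-functor `𝒜(K,-) : 𝒜 ⟶ 𝒱`. -/
def VCat.repr {V : Type u} [Category.{v} V] {𝒱 : SkewClosedStruct V}
    (𝒜 : VCat.{v, u, u} V 𝒱) (K : 𝒜.Obj) : VFun 𝒜 𝒱.self where
  obj := fun A => 𝒜.Hom K A
  map := fun A B => 𝒜.comp K A B
  EF1 := fun A B C => 𝒜.EC1 K B A C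
  EF2 := fun A => 𝒜.EC3 K A

/-- A closed functor between left skew-closed categories. -/
structure ClosedFunctorStruct {V : Type u} {W : Type w} [Category.{v} V] [Category.{v} W]
    (𝒱 : SkewClosedStruct V) (𝒲 : SkewClosedStruct W) (F : V ⥤ W) where
  ψ0 : 𝒲.unit ⟶ F.obj 𝒱.unit
  ψ : ∀ A B : V, F.obj (𝒱.ihom A B) ⟶ 𝒲.ihom (F.obj A) (F.obj B)
  ψ_natural : ∀ {A A' B B' : V} (f : A' ⟶ A) (g : B ⟶ B'),
      F.map (𝒱.imap f g) ≫ ψ A' B' = ψ A B ≫ 𝒲.imap (F.map f) (F.map g)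
  SCF1 : ∀ A : V,
      ψ 𝒱.unit A ≫ 𝒲.imap ψ0 (𝟙 (F.obj A)) ≫ 𝒲.i (F.obj A) = F.map (𝒱.i A)
  SCF2 : ∀ A : V, ψ0 ≫ F.map (𝒱.j A) ≫ ψ A A = 𝒲.j (F.obj A)
  SCF3 : ∀ A B C : V,
      F.map (𝒱.L A B C) ≫ ψ (𝒱.ihom A B) (𝒱.ihom A C) ≫
          𝒲.imap (𝟙 (F.obj (𝒱.ihom A B))) (ψ A C)
        = ψ B C ≫ 𝒲.L (F.obj A) (F.obj B) (F.obj C) ≫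
            𝒲.imap (ψ A B) (𝟙 (𝒲.ihom (F.obj A) (F.obj C)))

universe w₂

section PushForward

variable {V : Type u} [Category.{v} V] {W : Type w} [Category.{v} W]
variable {𝒱 : SkewClosedStruct V} {𝒲 : SkewClosedStruct W} {F : V ⥤ W}

/-- Unit of the pushforward `𝒲`-category `F_*𝒜`: `I ⟶ FI ⟶ F𝒜(A,A)`. -/
def pushJ (cF : ClosedFunctorStruct 𝒱 𝒲 F) (𝒜 : VCat.{v, u, w₂} V 𝒱) (A : 𝒜.Obj) :
    𝒲.unit ⟶ F.obj (𝒜.Hom A A) :=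
  cF.ψ0 ≫ F.map (𝒜.id A)

/-- Composition of the pushforward `𝒲`-category `F_*𝒜`:
`F𝒜(B,C) ⟶ F[𝒜(A,B),𝒜(A,C)] ⟶ [F𝒜(A,B), F𝒜(A,C)]`. -/
def pushL (cF : ClosedFunctorStruct 𝒱 𝒲 F) (𝒜 : VCat.{v, u, w₂} V 𝒱) (A B C : 𝒜.Obj) :
    F.obj (𝒜.Hom B C) ⟶ 𝒲.ihom (F.obj (𝒜.Hom A B)) (F.obj (𝒜.Hom A C)) :=
  F.map (𝒜.comp A B C) ≫ cF.ψ (𝒜.Hom A B) (𝒜.Hom A C)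

/-- (Street, "Skew-closed categories", §3, formula (10).)
A closed functor `F : 𝒱 ⟶ 𝒲` determines a functor `F₊ : 𝒱-Cat ⟶ 𝒲-Cat`: for every
`𝒱`-category `𝒜` the data `(objects of 𝒜, F𝒜(A,B), Fj∘ψ₀, ψ∘FL)` satisfy (EC1)–(EC3)
and so form a `𝒲`-category `F₊𝒜`; for every `𝒱`-functor `T` the morphisms `F(T_{A,B})`
satisfy (EF1)–(EF2) and so form a `𝒲`-functor `F₊T`; and `F₊` preserves identities and
composition of `𝒱`-functors. -/

private lemma imap_comp_l {A A' A'' B : W} (f : A' ⟶ A) (f' : A'' ⟶ A') :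
    𝒲.imap (f' ≫ f) (𝟙 B) = 𝒲.imap f (𝟙 B) ≫ 𝒲.imap f' (𝟙 B) := by
  rw [← 𝒲.imap_comp]; simp

private lemma imap_comp_r {A B B' B'' : W} (g : B ⟶ B') (g' : B' ⟶ B'') :
    𝒲.imap (𝟙 A) (g ≫ g') = 𝒲.imap (𝟙 A) g ≫ 𝒲.imap (𝟙 A) g' := by
  rw [← 𝒲.imap_comp]; simp

private lemma imap_swap {A A' B B' : W} (f : A' ⟶ A) (g : B ⟶ B') :
    𝒲.imap f (𝟙 B) ≫ 𝒲.imap (𝟙 A') g = 𝒲.imap (𝟙 A) g ≫ 𝒲.imap f (𝟙 B') := by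
  rw [← 𝒲.imap_comp, ← 𝒲.imap_comp]; simp

private lemma psi_nat_assoc (cF : ClosedFunctorStruct 𝒱 𝒲 F) {A A' B B' : V}
    (f : A' ⟶ A) (g : B ⟶ B') {Z : W} (h : 𝒲.ihom (F.obj A') (F.obj B') ⟶ Z) :
    cF.ψ A B ≫ 𝒲.imap (F.map f) (F.map g) ≫ h = F.map (𝒱.imap f g) ≫ cF.ψ A' B' ≫ h := by
  rw [← Category.assoc, ← cF.ψ_natural, Category.assoc]

private lemma scf3_assoc (cF : ClosedFunctorStruct 𝒱 𝒲 F) (A B C : V) {Z : W}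
    (h : 𝒲.ihom (F.obj (𝒱.ihom A B)) (𝒲.ihom (F.obj A) (F.obj C)) ⟶ Z) :
    F.map (𝒱.L A B C) ≫ cF.ψ (𝒱.ihom A B) (𝒱.ihom A C) ≫
        𝒲.imap (𝟙 (F.obj (𝒱.ihom A B))) (cF.ψ A C) ≫ h
      = cF.ψ B C ≫ 𝒲.L (F.obj A) (F.obj B) (F.obj C) ≫
          𝒲.imap (cF.ψ A B) (𝟙 (𝒲.ihom (F.obj A) (F.obj C))) ≫ h := by
  have := cF.SCF3 A B C
  simp only [← Category.assoc] at this ⊢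
  rw [this]

theorem closed_functor_pushforward (cF : ClosedFunctorStruct 𝒱 𝒲 F) :
    -- `F₊𝒜` is a `𝒲`-category
    (∀ (𝒜 : VCat.{v, u, w₂} V 𝒱) (A B C D : 𝒜.Obj),
      pushL cF 𝒜 A C D ≫
          𝒲.L (F.obj (𝒜.Hom A B)) (F.obj (𝒜.Hom A C)) (F.obj (𝒜.Hom A D)) ≫
          𝒲.imap (pushL cF 𝒜 A B C)
            (𝟙 (𝒲.ihom (F.obj (𝒜.Hom A B)) (F.obj (𝒜.Hom A D))))
        = pushL cF 𝒜 B C D ≫ 𝒲.imap (𝟙 (F.obj (𝒜.Hom B C))) (pushL cF 𝒜 A B D)) ∧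
    (∀ (𝒜 : VCat.{v, u, w₂} V 𝒱) (A C : 𝒜.Obj),
      pushL cF 𝒜 A A C ≫ 𝒲.imap (pushJ cF 𝒜 A) (𝟙 (F.obj (𝒜.Hom A C))) ≫
          𝒲.i (F.obj (𝒜.Hom A C))
        = 𝟙 (F.obj (𝒜.Hom A C))) ∧
    (∀ (𝒜 : VCat.{v, u, w₂} V 𝒱) (A B : 𝒜.Obj),
      pushJ cF 𝒜 B ≫ pushL cF 𝒜 A B B = 𝒲.j (F.obj (𝒜.Hom A B))) ∧
    -- `F₊T` is a `𝒲`-functor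
    (∀ (𝒜 𝒳 : VCat.{v, u, w₂} V 𝒱) (T : VFun 𝒜 𝒳) (A B C : 𝒜.Obj),
      F.map (T.map A C) ≫ pushL cF 𝒳 (T.obj B) (T.obj A) (T.obj C) ≫
          𝒲.imap (F.map (T.map B A)) (𝟙 (F.obj (𝒳.Hom (T.obj B) (T.obj C))))
        = pushL cF 𝒜 B A C ≫ 𝒲.imap (𝟙 (F.obj (𝒜.Hom B A))) (F.map (T.map B C))) ∧
    (∀ (𝒜 𝒳 : VCat.{v, u, w₂} V 𝒱) (T : VFun 𝒜 𝒳) (A : 𝒜.Obj),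
      pushJ cF 𝒜 A ≫ F.map (T.map A A) = pushJ cF 𝒳 (T.obj A)) ∧
    -- `F₊` preserves identity `𝒱`-functors and composites of `𝒱`-functors
    (∀ (𝒜 : VCat.{v, u, w₂} V 𝒱) (A B : 𝒜.Obj),
      F.map (𝟙 (𝒜.Hom A B)) = 𝟙 (F.obj (𝒜.Hom A B))) ∧
    (∀ (𝒜 𝒳 𝒴 : VCat.{v, u, w₂} V 𝒱) (T : VFun 𝒜 𝒳) (S : VFun 𝒳 𝒴) (A B : 𝒜.Obj),
      F.map (T.map A B ≫ S.map (T.obj A) (T.obj B))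
        = F.map (T.map A B) ≫ F.map (S.map (T.obj A) (T.obj B))) := by

  refine ⟨?_, ?_, ?_, ?_, ?_, fun 𝒜 A B => F.map_id _, fun 𝒜 𝒳 𝒴 T S A B => F.map_comp _ _⟩
  · -- EC1
    intro 𝒜 A B C D
    simp only [pushL, imap_comp_l, imap_comp_r, Category.assoc]
    rw [← scf3_assoc, ← imap_swap]
    rw [show (𝟙 (F.obj (𝒱.ihom (𝒜.Hom A B) (𝒜.Hom A D)))) = F.map (𝟙 _) from (F.map_id _).symm,
      psi_nat_assoc]
    rw [show (𝟙 (F.obj (𝒜.Hom B C))) = F.map (𝟙 _) from (F.map_id _).symm, psi_nat_assoc]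
    simp only [← Category.assoc, ← F.map_comp]
    congr 2
    exact congrArg F.map (by simpa [Category.assoc] using 𝒜.EC1 A B C D)
  · -- EC2
    intro 𝒜 A C
    simp only [pushL, pushJ, imap_comp_l, Category.assoc]
    rw [show (𝟙 (F.obj (𝒜.Hom A C))) = F.map (𝟙 _) from (F.map_id _).symm, psi_nat_assoc,
      F.map_id]
    have h := cF.SCF1 (𝒜.Hom A C)
    try simp only [Category.assoc] at h ⊢
    rw [h]
    simp only [← F.map_comp, Category.assoc]
    rw [𝒜.EC2, F.map_id]
  · -- EC3
    intro 𝒜 A B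
    simp only [pushJ, pushL, Category.assoc]
    rw [← Category.assoc (F.map (𝒜.id B)), ← F.map_comp, 𝒜.EC3]
    exact cF.SCF2 _
  · -- EF1
    intro 𝒜 𝒳 T A B C
    simp only [pushL, Category.assoc]
    rw [show (𝟙 (F.obj (𝒳.Hom (T.obj B) (T.obj C)))) = F.map (𝟙 _) from (F.map_id _).symm,
      show (𝟙 (F.obj (𝒜.Hom B A))) = F.map (𝟙 _) from (F.map_id _).symm,
      ← cF.ψ_natural, ← cF.ψ_natural]
    simp only [← Category.assoc, ← F.map_comp]
    congr 1
    exact congrArg F.map (by simpa [Category.assoc] using T.EF1 A B C)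
  · -- EF2
    intro 𝒜 𝒳 T A
    simp [pushJ, ← F.map_comp, T.EF2]

end PushForward
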